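/- Let u ∈ L²(T) be real-valued. Then for every f ∈ H¹₊ and every κ ≥ 1: ‖Π_n(u·Π_n f)‖_{L²} ≤ √3 κ^{-1/2} ‖u‖_{L²} ‖(-i∂_x + κ)f‖_{L²}, uniformly in 1 ≤ n ≤ ∞. Consequently, the operator Π_n u Π_n is infinitesimally bounded with respect to -i∂_x on L²₊: for every ε > 0 there exists C(ε) such that ‖Π_n u Π_n f‖_{L²} ≤ ε‖∂_x f‖_{L²} + C(ε)‖f‖_{L²} for all f ∈ H¹₊. -/

import Mathlib

open scoped ComplexConjugate

noncomputable section

/-- The squared-summed `ℓ²` norm of a sequence of Fourier coefficients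
(`= L²` norm of the corresponding function on the torus, by Plancherel). -/
def l2norm {ι : Type*} (a : ι → ℂ) : ℝ := Real.sqrt (∑' k, ‖a k‖ ^ 2)

/-- The Fourier truncation `Π_n` onto frequencies `0 ≤ k < n` (with `Π_∞ = Π`),
acting on Hardy-space Fourier coefficients. -/
def trunc (n : ℕ∞) (a : ℕ → ℂ) : ℕ → ℂ := fun k => if (k : ℕ∞) < n then a k else 0

/-- The free resolvent `R₀(κ) = (-i∂ₓ + κ)⁻¹` on the Hardy space, as the Fourier
multiplier with symbol `1/(k+κ)`. -/
def res (κ : ℝ) (a : ℕ → ℂ) : ℕ → ℂ := fun k => a k / ((k : ℂ) + κ)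

/-- Fourier coefficients of the product `u · b` of a general `L²(𝕋)` function `u`
(coefficients indexed by `ℤ`) with a Hardy-space function `b`. -/
def mulZ (u : ℤ → ℂ) (b : ℕ → ℂ) : ℤ → ℂ := fun k => ∑' l : ℕ, u (k - (l : ℤ)) * b l

/-- Fourier coefficients of the product `u · b` of two Hardy-space functions. -/
def mulH (u b : ℕ → ℂ) : ℕ → ℂ :=
  fun k => (Finset.range (k + 1)).sum fun l => u (k - l) * b l

/-- Nonnegative Fourier coefficients of the product `conj u · b` for Hardy-space
functions `u, b`: `(ū·b)^(k) = ∑_{l≥0} conj(û(l)) b̂(l+k)` for `k ≥ 0`. -/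
def mulConjH (u b : ℕ → ℂ) : ℕ → ℂ := fun k => ∑' l : ℕ, conj (u l) * b (l + k)

/-- The truncated Toeplitz part `Π_n(u · Π_n f)` of the (BO) Lax operator, on the Fourier side. -/
def toepBO (u : ℤ → ℂ) (n : ℕ∞) (f : ℕ → ℂ) : ℕ → ℂ :=
  trunc n fun k => mulZ u (trunc n f) (k : ℤ)

/-- `(L_n + κ)f` for the truncated (BO) Lax operator `L_n = -i∂ₓ - Π_n u Π_n`,
on the Fourier side (the Fourier multiplier of `-i∂ₓ` on the Hardy space is `k`). -/
def LplusBO (u : ℤ → ℂ) (n : ℕ∞) (κ : ℝ) (f : ℕ → ℂ) : ℕ → ℂ :=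
  fun k => ((k : ℂ) + κ) * f k - toepBO u n f k

/-- The weighted Sobolev norm `‖f‖_{H^s_κ}`, `‖f‖²_{H^s_κ} = ∑ₖ (|k|+κ)^{2s}|f̂(k)|²`,
for a Hardy-space function (where `|k| = k`). -/
def hnorm (s κ : ℝ) (f : ℕ → ℂ) : ℝ :=
  Real.sqrt (∑' k : ℕ, ((k : ℝ) + κ) ^ (2 * s) * ‖f k‖ ^ 2)

/-- Membership in `H¹₊ = H¹ ∩ L²₊`, on the Fourier side. -/
def memH1 (f : ℕ → ℂ) : Prop := Summable fun k : ℕ => ((k : ℝ) + 1) ^ 2 * ‖f k‖ ^ 2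

/-!
STATEMENT 18 (eq. (24)/(25)): Let `u ∈ L²(𝕋)` be real-valued. Then for every `f ∈ H¹₊`,
every `κ ≥ 1`, and uniformly in `1 ≤ n ≤ ∞`:
`‖Π_n(u·Π_n f)‖_{L²} ≤ √3 κ^{-1/2} ‖u‖_{L²} ‖(-i∂ₓ + κ)f‖_{L²}`.
Consequently, `Π_n u Π_n` is infinitesimally bounded with respect to `-i∂ₓ` on `L²₊`:
for every `ε > 0` there is `C(ε)` with
`‖Π_n u Π_n f‖_{L²} ≤ ε‖∂ₓ f‖_{L²} + C(ε)‖f‖_{L²}` for all `f ∈ H¹₊`.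
-/
section Helpers

open MeasureTheory ENNReal

/-- Cauchy–Schwarz for `ℝ≥0∞`-valued tsums. -/
theorem stmt18.ecs {ι : Type*} [MeasurableSpace ι] [MeasurableSingletonClass ι] [Countable ι]
    (x y : ι → ℝ≥0∞) : (∑' i, x i * y i) ^ 2 ≤ (∑' i, x i ^ 2) * (∑' i, y i ^ 2) := by
  have hpq : Real.HolderConjugate 2 2 := by rw [Real.holderConjugate_iff]; exact ⟨one_lt_two, by norm_num⟩
  have hx : AEMeasurable x Measure.count := (measurable_of_countable x).aemeasurable
  have hy : AEMeasurable y Measure.count := (measurable_of_countable y).aemeasurable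
  have h := ENNReal.lintegral_mul_le_Lp_mul_Lq Measure.count hpq hx hy
  rw [lintegral_count, lintegral_count, lintegral_count] at h
  have h2 : (∑' i, x i * y i) ≤ ((∑' i, x i ^ (2:ℝ)) * (∑' i, y i ^ (2:ℝ))) ^ ((1:ℝ)/2) := by
    calc (∑' i, x i * y i) ≤ (∑' i, x i ^ (2:ℝ)) ^ ((1:ℝ)/2) * (∑' i, y i ^ (2:ℝ)) ^ ((1:ℝ)/2) := h
    _ = _ := (ENNReal.mul_rpow_of_nonneg _ _ (by norm_num)).symm
  calc (∑' i, x i * y i) ^ 2 ≤ (((∑' i, x i ^ (2:ℝ)) * (∑' i, y i ^ (2:ℝ))) ^ ((1:ℝ)/2)) ^ 2 :=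
        pow_le_pow_left' h2 2
    _ = (∑' i, x i ^ (2:ℝ)) * (∑' i, y i ^ (2:ℝ)) := by
        rw [← ENNReal.rpow_natCast _ 2, ← ENNReal.rpow_mul]; norm_num
    _ = (∑' i, x i ^ 2) * (∑' i, y i ^ 2) := by
        congr 1 <;> { apply tsum_congr; intro i; rw [← ENNReal.rpow_natCast]; norm_num }

theorem stmt18.enorm_tsum_le {ι : Type*} [Countable ι] (v : ι → ℂ) :
    (‖∑' i, v i‖₊ : ℝ≥0∞) ≤ ∑' i, (‖v i‖₊ : ℝ≥0∞) := by
  by_cases hs : Summable v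
  · by_cases ht : (∑' i, (‖v i‖₊ : ℝ≥0∞)) = ⊤
    · simp [ht]
    · have hsum : Summable fun i => ‖v i‖₊ := ENNReal.tsum_coe_ne_top_iff_summable.mp ht
      rw [← ENNReal.coe_tsum hsum]
      exact_mod_cast nnnorm_tsum_le hsum
  · simp [tsum_eq_zero_of_not_summable hs]

theorem stmt18.sqrt_sq_enn (b : ℝ≥0∞) : b ^ ((1:ℝ)/2) * b ^ ((1:ℝ)/2) = b := by
  rw [← ENNReal.rpow_add_of_nonneg _ _ (by norm_num) (by norm_num)]
  norm_num

/-- ℓ²–ℓ¹ bound for convolution over the integers, `ℝ≥0∞`-valued. -/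
theorem stmt18.conv_bound (a : ℤ → ℝ≥0∞) (b : ℕ → ℝ≥0∞) :
    ∑' k : ℤ, (∑' l : ℕ, a (k - l) * b l) ^ 2 ≤ (∑' l, b l) ^ 2 * ∑' k, a k ^ 2 := by
  have step1 : ∀ k : ℤ, (∑' l : ℕ, a (k - l) * b l) ^ 2 ≤
      (∑' l, b l) * ∑' l : ℕ, a (k - l) ^ 2 * b l := by
    intro k
    have h := stmt18.ecs (fun l : ℕ => b l ^ ((1:ℝ)/2)) (fun l : ℕ => a (k - l) * b l ^ ((1:ℝ)/2))
    calc (∑' l : ℕ, a (k - l) * b l) ^ 2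
        = (∑' l : ℕ, b l ^ ((1:ℝ)/2) * (a (k - l) * b l ^ ((1:ℝ)/2))) ^ 2 := by
          congr 1; apply tsum_congr; intro l
          rw [mul_comm (b l ^ ((1:ℝ)/2)), mul_assoc, stmt18.sqrt_sq_enn]
      _ ≤ (∑' l : ℕ, (b l ^ ((1:ℝ)/2)) ^ 2) * ∑' l : ℕ, (a (k - l) * b l ^ ((1:ℝ)/2)) ^ 2 := h
      _ = (∑' l, b l) * ∑' l : ℕ, a (k - l) ^ 2 * b l := by
          congr 1
          · apply tsum_congr; intro l; rw [sq, stmt18.sqrt_sq_enn]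
          · apply tsum_congr; intro l
            rw [mul_pow, sq (b l ^ ((1:ℝ)/2)), stmt18.sqrt_sq_enn]
  calc ∑' k : ℤ, (∑' l : ℕ, a (k - l) * b l) ^ 2
      ≤ ∑' k : ℤ, (∑' l, b l) * ∑' l : ℕ, a (k - l) ^ 2 * b l := ENNReal.tsum_le_tsum step1
    _ = (∑' l, b l) * ∑' k : ℤ, ∑' l : ℕ, a (k - l) ^ 2 * b l := ENNReal.tsum_mul_left
    _ = (∑' l, b l) * ∑' l : ℕ, ∑' k : ℤ, a (k - l) ^ 2 * b l := by rw [ENNReal.tsum_comm]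
    _ = (∑' l, b l) * ∑' l : ℕ, (∑' k, a k ^ 2) * b l := by
        congr 1; apply tsum_congr; intro l
        rw [ENNReal.tsum_mul_right]
        congr 1
        exact (Equiv.subRight (l:ℤ)).tsum_eq (fun k => a k ^ 2)
    _ = (∑' l, b l) ^ 2 * ∑' k, a k ^ 2 := by
        rw [ENNReal.tsum_mul_left, sq]; ring

theorem stmt18.res_sum {κ : ℝ} (hκ : 1 ≤ κ) :
    Summable (fun l : ℕ => (1/((l:ℝ)+κ))^2) ∧ (∑' l : ℕ, (1/((l:ℝ)+κ))^2) ≤ 3/κ := by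
  have hκ0 : (0:ℝ) < κ := lt_of_lt_of_le one_pos hκ
  have hpos : ∀ l : ℕ, (0:ℝ) < (l:ℝ) + κ := fun l =>
    add_pos_of_nonneg_of_pos (Nat.cast_nonneg l) hκ0
  set c : ℕ → ℝ := fun l => 1/((l:ℝ)+κ) with hc
  have ht : ∀ l : ℕ, c l - c (l+1) = 1/(((l:ℝ)+κ)*((l:ℝ)+1+κ)) := by
    intro l
    have h1 := hpos l
    have h2 : (0:ℝ) < (l:ℝ)+1+κ := by linarith
    simp only [hc]
    push_cast
    field_simp
    ring
  have htnonneg : ∀ l : ℕ, 0 ≤ c l - c (l+1) := by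
    intro l
    rw [ht l]
    have h1 := hpos l
    have h2 : (0:ℝ) < (l:ℝ)+1+κ := by linarith
    positivity
  have hpart : ∀ N : ℕ, ∑ i ∈ Finset.range N, (c i - c (i+1)) = c 0 - c N := fun N =>
    Finset.sum_range_sub' c N
  have htsummable : Summable fun l => c l - c (l+1) := by
    apply summable_of_sum_range_le (c := c 0) htnonneg
    intro N
    rw [hpart N]
    have : 0 ≤ c N := by
      simp only [hc]; positivity
    linarith
  have htend : Filter.Tendsto (fun N : ℕ => c N) Filter.atTop (nhds 0) := by
    have hbase : Filter.Tendsto (fun N : ℕ => (N:ℝ) + κ) Filter.atTop Filter.atTop :=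
      Filter.tendsto_atTop_add_const_right _ κ tendsto_natCast_atTop_atTop
    exact (tendsto_inv_atTop_zero.comp hbase).congr fun n => by simp [hc, one_div]
  have htsum : (∑' l : ℕ, (c l - c (l+1))) = c 0 := by
    refine tendsto_nhds_unique htsummable.hasSum.tendsto_sum_nat ?_
    have : Filter.Tendsto (fun N : ℕ => c 0 - c N) Filter.atTop (nhds (c 0 - 0)) :=
      Filter.Tendsto.const_sub _ htend
    simpa using this.congr fun N => (hpart N).symm
  have hcomp : ∀ l : ℕ, c (l+1) ^ 2 ≤ c l - c (l+1) := by
    intro l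
    rw [ht l]
    have h1 := hpos l
    have h2 : (0:ℝ) < (l:ℝ)+1+κ := by linarith
    have : c (l+1) ^ 2 = 1/(((l:ℝ)+1+κ)*((l:ℝ)+1+κ)) := by
      simp only [hc]; push_cast; rw [div_pow, one_pow, sq]
    rw [this]
    apply one_div_le_one_div_of_le (by positivity)
    nlinarith
  have hshift : Summable fun l : ℕ => c (l+1) ^ 2 :=
    Summable.of_nonneg_of_le (fun l => sq_nonneg _) hcomp htsummable
  have hsummable : Summable fun l : ℕ => c l ^ 2 := by
    rw [← summable_nat_add_iff 1]
    exact hshift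
  constructor
  · exact hsummable
  · have h0 : (∑' l : ℕ, c l ^ 2) = c 0 ^ 2 + ∑' l : ℕ, c (l+1) ^ 2 :=
      hsummable.tsum_eq_zero_add
    have h1 : (∑' l : ℕ, c (l+1) ^ 2) ≤ ∑' l : ℕ, (c l - c (l+1)) :=
      Summable.tsum_le_tsum hcomp hshift htsummable
    have hc0 : c 0 = 1/κ := by simp [hc]
    have hsq : c 0 ^ 2 ≤ 1/κ := by
      rw [hc0, div_pow, one_pow]
      exact one_div_le_one_div_of_le hκ0 (by nlinarith)
    calc (∑' l : ℕ, c l ^ 2) = c 0 ^ 2 + ∑' l : ℕ, c (l+1) ^ 2 := h0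
      _ ≤ 1/κ + 1/κ := by
          apply add_le_add hsq
          rw [htsum, hc0] at h1
          exact h1
      _ ≤ 3/κ := by
          rw [← add_div]
          gcongr
          norm_num
  
theorem stmt18.esum_eq {ι : Type*} (a : ι → ℂ) (h : Summable fun k => ‖a k‖^2) :
    (∑' k, ((‖a k‖₊ : ℝ≥0∞))^2) = ENNReal.ofReal (∑' k, ‖a k‖^2) := by
  rw [ENNReal.ofReal_tsum_of_nonneg (fun k => sq_nonneg _) h]
  exact tsum_congr fun k => by
    rw [← enorm_eq_nnnorm, ← ofReal_norm, ← ENNReal.ofReal_pow (norm_nonneg _)]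

theorem stmt18.l2norm_le_of {ι : Type*} (a : ι → ℂ) {X : ℝ≥0∞} (hX : X ≠ ⊤)
    (h : (∑' k, ((‖a k‖₊ : ℝ≥0∞))^2) ≤ X) :
    Summable (fun k => ‖a k‖^2) ∧ l2norm a ≤ Real.sqrt X.toReal := by
  have hpt : ∀ k, ((‖a k‖₊ : ℝ≥0∞))^2 = ENNReal.ofReal (‖a k‖^2) := fun k => by
    rw [← enorm_eq_nnnorm, ← ofReal_norm, ← ENNReal.ofReal_pow (norm_nonneg _)]
  have hne : (∑' k, ENNReal.ofReal (‖a k‖^2)) ≠ ⊤ := by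
    rw [← tsum_congr hpt]
    exact (lt_of_le_of_lt h hX.lt_top).ne
  have hsum : Summable fun k => ‖a k‖^2 := by
    have h1 := ENNReal.summable_toReal hne
    refine h1.congr fun k => ?_
    rw [ENNReal.toReal_ofReal (sq_nonneg _)]
  refine ⟨hsum, ?_⟩
  have heq : (∑' k, ((‖a k‖₊ : ℝ≥0∞))^2).toReal = ∑' k, ‖a k‖^2 := by
    rw [stmt18.esum_eq a hsum, ENNReal.toReal_ofReal (tsum_nonneg fun k => sq_nonneg _)]
  have hmono := ENNReal.toReal_mono hX h
  rw [heq] at hmono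
  exact Real.sqrt_le_sqrt hmono

theorem stmt18.sqrt_add_le {x y : ℝ} (hx : 0 ≤ x) (hy : 0 ≤ y) :
    Real.sqrt (x + y) ≤ Real.sqrt x + Real.sqrt y := by
  have h : x + y ≤ (Real.sqrt x + Real.sqrt y)^2 := by
    nlinarith [Real.sq_sqrt hx, Real.sq_sqrt hy, Real.sqrt_nonneg x, Real.sqrt_nonneg y]
  calc Real.sqrt (x + y) ≤ Real.sqrt ((Real.sqrt x + Real.sqrt y)^2) := Real.sqrt_le_sqrt h
    _ = Real.sqrt x + Real.sqrt y := Real.sqrt_sq (by positivity)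

end Helpers

theorem stmt18 (u : ℤ → ℂ) (hu : Summable fun k : ℤ => ‖u k‖ ^ 2)
    (hreal : ∀ k : ℤ, u (-k) = conj (u k)) :
    (∀ n : ℕ∞, 1 ≤ n → ∀ κ : ℝ, 1 ≤ κ → ∀ f : ℕ → ℂ, memH1 f →
      l2norm (toepBO u n f) ≤
        Real.sqrt 3 * κ ^ (-(1 : ℝ) / 2) * l2norm u *
          l2norm (fun k : ℕ => ((k : ℂ) + κ) * f k)) ∧
    ∀ ε > (0 : ℝ), ∃ C : ℝ, ∀ n : ℕ∞, 1 ≤ n → ∀ f : ℕ → ℂ, memH1 f →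
      l2norm (toepBO u n f) ≤
        ε * l2norm (fun k : ℕ => (k : ℂ) * f k) + C * l2norm f := by
  have main : ∀ n : ℕ∞, 1 ≤ n → ∀ κ : ℝ, 1 ≤ κ → ∀ f : ℕ → ℂ, memH1 f →
      l2norm (toepBO u n f) ≤
        Real.sqrt 3 * κ ^ (-(1 : ℝ) / 2) * l2norm u *
          l2norm (fun k : ℕ => ((k : ℂ) + κ) * f k) := by
    intro n hn κ hκ f hf
    have hκ0 : (0:ℝ) < κ := lt_of_lt_of_le one_pos hκ
    have hpos : ∀ l : ℕ, (0:ℝ) < (l:ℝ) + κ := fun l =>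
      add_pos_of_nonneg_of_pos (Nat.cast_nonneg l) hκ0
    set g : ℕ → ℂ := fun k => ((k : ℂ) + κ) * f k with hg
    set b : ℕ → ℂ := trunc n f with hb
    -- norm identity for g
    have hnormg : ∀ l : ℕ, ‖g l‖ = ((l:ℝ) + κ) * ‖f l‖ := by
      intro l
      have hcast : ((l:ℕ):ℂ) + (κ:ℂ) = (((l:ℝ) + κ : ℝ) : ℂ) := by push_cast; ring
      rw [hg]
      simp only []
      rw [norm_mul, hcast, Complex.norm_real, Real.norm_eq_abs, abs_of_pos (hpos l)]
    -- summability of g-squares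
    have hg_sum : Summable fun k : ℕ => ‖g k‖^2 := by
      apply Summable.of_nonneg_of_le (fun k => sq_nonneg _) ?_ (hf.mul_left (κ^2))
      intro k
      rw [hnormg k, mul_pow]
      have hle : ((k:ℝ) + κ) ≤ κ * ((k:ℝ) + 1) := by nlinarith [Nat.cast_nonneg (α := ℝ) k]
      have h2 : ((k:ℝ) + κ)^2 ≤ κ^2 * ((k:ℝ)+1)^2 := by nlinarith [hpos k]
      calc ((k:ℝ) + κ)^2 * ‖f k‖^2 ≤ (κ^2 * ((k:ℝ)+1)^2) * ‖f k‖^2 := by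
            exact mul_le_mul_of_nonneg_right h2 (sq_nonneg _)
        _ = κ^2 * (((k:ℝ)+1)^2 * ‖f k‖^2) := by ring
    -- ENNReal quantities
    set U : ENNReal := ∑' k : ℤ, ((‖u k‖₊ : ENNReal))^2 with hU
    set G : ENNReal := ∑' k : ℕ, ((‖g k‖₊ : ENNReal))^2 with hG
    set W : ENNReal := ∑' l : ℕ, (ENNReal.ofReal (1/((l:ℝ)+κ)))^2 with hW
    have hUne : U ≠ ⊤ := by
      rw [hU, stmt18.esum_eq u hu]; exact ENNReal.ofReal_ne_top
    have hGne : G ≠ ⊤ := by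
      rw [hG, stmt18.esum_eq g hg_sum]; exact ENNReal.ofReal_ne_top
    -- pointwise: ‖b l‖ₑ ≤ w l * ‖g l‖ₑ
    have hbpt : ∀ l : ℕ, ((‖b l‖₊ : ENNReal)) ≤
        ENNReal.ofReal (1/((l:ℝ)+κ)) * ((‖g l‖₊ : ENNReal)) := by
      intro l
      have hfl : ((‖f l‖₊ : ENNReal)) = ENNReal.ofReal (1/((l:ℝ)+κ)) * ((‖g l‖₊ : ENNReal)) := by
        rw [← enorm_eq_nnnorm, ← ofReal_norm, ← enorm_eq_nnnorm, ← ofReal_norm,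
          ← ENNReal.ofReal_mul (by positivity)]
        congr 1
        rw [hnormg l]
        field_simp
      rw [hb]
      unfold trunc
      split
      · rw [hfl]
      · simp
    -- the chain of ENNReal estimates
    have hT : (∑' k : ℕ, ((‖toepBO u n f k‖₊ : ENNReal))^2) ≤ ENNReal.ofReal (3/κ) * G * U := by
      have step_a : ∀ k : ℕ, ((‖toepBO u n f k‖₊ : ENNReal))^2 ≤
          ((‖mulZ u b (k:ℤ)‖₊ : ENNReal))^2 := by
        intro k
        apply pow_le_pow_left'
        unfold toepBO trunc
        split
        · exact le_rfl
        · simp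
      have step_c : ∀ k : ℤ, ((‖mulZ u b k‖₊ : ENNReal))^2 ≤
          (∑' l : ℕ, ((‖u (k - l)‖₊ : ENNReal)) * ((‖b l‖₊ : ENNReal)))^2 := by
        intro k
        apply pow_le_pow_left'
        calc ((‖mulZ u b k‖₊ : ENNReal)) ≤ ∑' l : ℕ, ((‖u (k - l) * b l‖₊ : ENNReal)) :=
              stmt18.enorm_tsum_le _
          _ = ∑' l : ℕ, ((‖u (k - l)‖₊ : ENNReal)) * ((‖b l‖₊ : ENNReal)) := by
              apply tsum_congr; intro l; rw [nnnorm_mul, ENNReal.coe_mul]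
      have hBsq : (∑' l : ℕ, ((‖b l‖₊ : ENNReal)))^2 ≤ W * G := by
        calc (∑' l : ℕ, ((‖b l‖₊ : ENNReal)))^2
            ≤ (∑' l : ℕ, ENNReal.ofReal (1/((l:ℝ)+κ)) * ((‖g l‖₊ : ENNReal)))^2 := by
              apply pow_le_pow_left'
              exact ENNReal.tsum_le_tsum hbpt
          _ ≤ W * G := stmt18.ecs _ _
      calc (∑' k : ℕ, ((‖toepBO u n f k‖₊ : ENNReal))^2)
          ≤ ∑' k : ℕ, ((‖mulZ u b (k:ℤ)‖₊ : ENNReal))^2 := ENNReal.tsum_le_tsum step_a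
        _ ≤ ∑' k : ℤ, ((‖mulZ u b k‖₊ : ENNReal))^2 :=
            ENNReal.tsum_comp_le_tsum_of_injective (fun x y h => by exact_mod_cast h) _
        _ ≤ ∑' k : ℤ, (∑' l : ℕ, ((‖u (k - l)‖₊ : ENNReal)) * ((‖b l‖₊ : ENNReal)))^2 :=
            ENNReal.tsum_le_tsum step_c
        _ ≤ (∑' l : ℕ, ((‖b l‖₊ : ENNReal)))^2 * U :=
            stmt18.conv_bound (fun k => ((‖u k‖₊ : ENNReal))) (fun l => ((‖b l‖₊ : ENNReal)))
        _ ≤ (W * G) * U := mul_le_mul_left hBsq U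
        _ ≤ (ENNReal.ofReal (3/κ) * G) * U := by
            apply mul_le_mul_left
            apply mul_le_mul_left
            -- W ≤ ofReal (3/κ)
            obtain ⟨hsumW, hleW⟩ := stmt18.res_sum hκ
            calc W = ∑' l : ℕ, ENNReal.ofReal ((1/((l:ℝ)+κ))^2) := by
                  rw [hW]
                  exact tsum_congr fun l => (ENNReal.ofReal_pow (by positivity) 2).symm
              _ = ENNReal.ofReal (∑' l : ℕ, (1/((l:ℝ)+κ))^2) :=
                  (ENNReal.ofReal_tsum_of_nonneg (fun l => sq_nonneg _) hsumW).symm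
              _ ≤ ENNReal.ofReal (3/κ) := ENNReal.ofReal_le_ofReal hleW
    -- convert to real estimate
    have hXne : ENNReal.ofReal (3/κ) * G * U ≠ ⊤ :=
      ENNReal.mul_ne_top (ENNReal.mul_ne_top ENNReal.ofReal_ne_top hGne) hUne
    obtain ⟨-, hfinal⟩ := stmt18.l2norm_le_of (toepBO u n f) hXne hT
    have htoReal : (ENNReal.ofReal (3/κ) * G * U).toReal =
        (3/κ) * (∑' k : ℕ, ‖g k‖^2) * (∑' k : ℤ, ‖u k‖^2) := by
      rw [ENNReal.toReal_mul, ENNReal.toReal_mul,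
        ENNReal.toReal_ofReal (by positivity),
        hG, stmt18.esum_eq g hg_sum, ENNReal.toReal_ofReal (tsum_nonneg fun k => sq_nonneg _),
        hU, stmt18.esum_eq u hu, ENNReal.toReal_ofReal (tsum_nonneg fun k => sq_nonneg _)]
    rw [htoReal] at hfinal
    have htg : (0:ℝ) ≤ ∑' k : ℕ, ‖g k‖^2 := tsum_nonneg fun k => sq_nonneg _
    have htu : (0:ℝ) ≤ ∑' k : ℤ, ‖u k‖^2 := tsum_nonneg fun k => sq_nonneg _
    have hsplit : Real.sqrt ((3/κ) * (∑' k : ℕ, ‖g k‖^2) * (∑' k : ℤ, ‖u k‖^2)) =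
        Real.sqrt (3/κ) * Real.sqrt (∑' k : ℕ, ‖g k‖^2) * Real.sqrt (∑' k : ℤ, ‖u k‖^2) := by
      rw [Real.sqrt_mul (by positivity), Real.sqrt_mul (by positivity)]
    have hrpow : κ ^ (-(1:ℝ)/2) = (Real.sqrt κ)⁻¹ := by
      rw [show (-(1:ℝ)/2) = -(1/2 : ℝ) by norm_num, Real.rpow_neg hκ0.le,
        ← Real.sqrt_eq_rpow]
    have hsqrt3κ : Real.sqrt (3/κ) = Real.sqrt 3 * (Real.sqrt κ)⁻¹ := by
      rw [Real.sqrt_div (by norm_num : (0:ℝ) ≤ 3), div_eq_mul_inv]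
    have hl2u : l2norm u = Real.sqrt (∑' k : ℤ, ‖u k‖^2) := rfl
    have hl2g : l2norm (fun k : ℕ => ((k : ℂ) + κ) * f k) =
        Real.sqrt (∑' k : ℕ, ‖g k‖^2) := rfl
    rw [hsplit, hsqrt3κ] at hfinal
    rw [hrpow, hl2u, hl2g]
    calc l2norm (toepBO u n f) ≤ Real.sqrt 3 * (Real.sqrt κ)⁻¹ *
          Real.sqrt (∑' k : ℕ, ‖g k‖^2) * Real.sqrt (∑' k : ℤ, ‖u k‖^2) := hfinal
      _ = Real.sqrt 3 * (Real.sqrt κ)⁻¹ * Real.sqrt (∑' k : ℤ, ‖u k‖^2) *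
          Real.sqrt (∑' k : ℕ, ‖g k‖^2) := by ring
  refine ⟨main, ?_⟩
  intro ε hε
  set κ : ℝ := max 1 (6 * (l2norm u)^2 / ε^2) with hκdef
  have hκ : (1:ℝ) ≤ κ := le_max_left _ _
  have hκ0 : (0:ℝ) < κ := lt_of_lt_of_le one_pos hκ
  have hsκ : (0:ℝ) < Real.sqrt κ := Real.sqrt_pos.mpr hκ0
  have hu0 : (0:ℝ) ≤ l2norm u := Real.sqrt_nonneg _
  refine ⟨ε * κ, ?_⟩
  intro n hn f hf
  have hbound := main n hn κ hκ f hf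
  have hrpow : κ ^ (-(1:ℝ)/2) = (Real.sqrt κ)⁻¹ := by
    rw [show (-(1:ℝ)/2) = -(1/2 : ℝ) by norm_num, Real.rpow_neg hκ0.le, ← Real.sqrt_eq_rpow]
  rw [hrpow] at hbound
  set g : ℕ → ℂ := fun k => ((k : ℂ) + κ) * f k with hg
  set A := l2norm (fun k : ℕ => (k : ℂ) * f k) with hA
  set B := l2norm f with hB
  have hA0 : 0 ≤ A := Real.sqrt_nonneg _
  have hB0 : 0 ≤ B := Real.sqrt_nonneg _
  -- summability facts
  have s1 : Summable fun k : ℕ => ‖(k : ℂ) * f k‖^2 := by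
    apply Summable.of_nonneg_of_le (fun k => sq_nonneg _) ?_ hf
    intro k
    rw [norm_mul, mul_pow, Complex.norm_natCast]
    have : ((k:ℝ))^2 ≤ ((k:ℝ)+1)^2 := by nlinarith [Nat.cast_nonneg (α := ℝ) k]
    exact mul_le_mul_of_nonneg_right this (sq_nonneg _)
  have s2 : Summable fun k : ℕ => ‖f k‖^2 := by
    apply Summable.of_nonneg_of_le (fun k => sq_nonneg _) ?_ hf
    intro k
    have h1 : (1:ℝ) ≤ ((k:ℝ)+1)^2 := by nlinarith [Nat.cast_nonneg (α := ℝ) k]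
    nlinarith [sq_nonneg (‖f k‖)]
  -- bound on l2norm g
  have hsplitg : l2norm g ≤ Real.sqrt 2 * A + Real.sqrt 2 * κ * B := by
    have hnormg : ∀ l : ℕ, ‖g l‖ = ((l:ℝ) + κ) * ‖f l‖ := by
      intro l
      have hcast : ((l:ℕ):ℂ) + (κ:ℂ) = (((l:ℝ) + κ : ℝ) : ℂ) := by push_cast; ring
      rw [hg]
      simp only []
      rw [norm_mul, hcast, Complex.norm_real, Real.norm_eq_abs,
        abs_of_pos (add_pos_of_nonneg_of_pos (Nat.cast_nonneg l) hκ0)]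
    have hpt : ∀ k : ℕ, ‖g k‖^2 ≤ 2 * ‖(k : ℂ) * f k‖^2 + 2 * κ^2 * ‖f k‖^2 := by
      intro k
      rw [hnormg k, norm_mul, Complex.norm_natCast, mul_pow, mul_pow]
      nlinarith [sq_nonneg (‖f k‖), sq_nonneg ((k:ℝ) - κ), sq_nonneg ((k:ℝ) + κ),
        Nat.cast_nonneg (α := ℝ) k, sq_nonneg (((k:ℝ) - κ) * ‖f k‖)]
    have hrhs_sum : Summable fun k : ℕ => 2 * ‖(k : ℂ) * f k‖^2 + 2 * κ^2 * ‖f k‖^2 :=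
      (s1.mul_left 2).add (s2.mul_left (2 * κ^2))
    have hg_sum : Summable fun k : ℕ => ‖g k‖^2 :=
      Summable.of_nonneg_of_le (fun k => sq_nonneg _) hpt hrhs_sum
    have htsum_le : (∑' k : ℕ, ‖g k‖^2) ≤
        2 * (∑' k : ℕ, ‖(k : ℂ) * f k‖^2) + 2 * κ^2 * (∑' k : ℕ, ‖f k‖^2) := by
      calc (∑' k : ℕ, ‖g k‖^2) ≤ ∑' k : ℕ, (2 * ‖(k : ℂ) * f k‖^2 + 2 * κ^2 * ‖f k‖^2) :=
            Summable.tsum_le_tsum hpt hg_sum hrhs_sum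
        _ = 2 * (∑' k : ℕ, ‖(k : ℂ) * f k‖^2) + 2 * κ^2 * (∑' k : ℕ, ‖f k‖^2) := by
            rw [Summable.tsum_add (s1.mul_left 2) (s2.mul_left (2 * κ^2)), tsum_mul_left, tsum_mul_left]
    have ht1 : (0:ℝ) ≤ 2 * (∑' k : ℕ, ‖(k : ℂ) * f k‖^2) := by
      have : (0:ℝ) ≤ ∑' k : ℕ, ‖(k : ℂ) * f k‖^2 := tsum_nonneg (fun k : ℕ => sq_nonneg ‖(k : ℂ) * f k‖); positivity
    have ht2 : (0:ℝ) ≤ 2 * κ^2 * (∑' k : ℕ, ‖f k‖^2) := by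
      have : (0:ℝ) ≤ ∑' k : ℕ, ‖f k‖^2 := tsum_nonneg (fun k : ℕ => sq_nonneg ‖f k‖); positivity
    calc l2norm g = Real.sqrt (∑' k : ℕ, ‖g k‖^2) := rfl
      _ ≤ Real.sqrt (2 * (∑' k : ℕ, ‖(k : ℂ) * f k‖^2) + 2 * κ^2 * (∑' k : ℕ, ‖f k‖^2)) :=
          Real.sqrt_le_sqrt htsum_le
      _ ≤ Real.sqrt (2 * (∑' k : ℕ, ‖(k : ℂ) * f k‖^2)) +
          Real.sqrt (2 * κ^2 * (∑' k : ℕ, ‖f k‖^2)) := stmt18.sqrt_add_le ht1 ht2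
      _ = Real.sqrt 2 * A + Real.sqrt 2 * κ * B := by
          rw [hA, hB]
          unfold l2norm
          rw [Real.sqrt_mul (by norm_num : (0:ℝ) ≤ 2),
            show 2 * κ^2 * (∑' k : ℕ, ‖f k‖^2) = 2 * (κ^2 * (∑' k : ℕ, ‖f k‖^2)) by ring,
            Real.sqrt_mul (by norm_num : (0:ℝ) ≤ 2),
            Real.sqrt_mul (sq_nonneg κ), Real.sqrt_sq hκ0.le]
          ring
  -- the coefficient bound
  have hcoef : Real.sqrt 2 * (Real.sqrt 3 * (Real.sqrt κ)⁻¹ * l2norm u) ≤ ε := by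
    have hκ6 : 6 * (l2norm u)^2 / ε^2 ≤ κ := le_max_right _ _
    have h6 : 6 * (l2norm u)^2 ≤ ε^2 * κ := by
      rw [div_le_iff₀ (by positivity)] at hκ6
      nlinarith
    have key : Real.sqrt 2 * Real.sqrt 3 * l2norm u ≤ ε * Real.sqrt κ := by
      have hlhs0 : 0 ≤ Real.sqrt 2 * Real.sqrt 3 * l2norm u := by positivity
      have hrhs0 : 0 ≤ ε * Real.sqrt κ := by positivity
      have hsq : (Real.sqrt 2 * Real.sqrt 3 * l2norm u)^2 ≤ (ε * Real.sqrt κ)^2 := by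
        have e2 : (Real.sqrt 2)^2 = 2 := Real.sq_sqrt (by norm_num)
        have e3 : (Real.sqrt 3)^2 = 3 := Real.sq_sqrt (by norm_num)
        have eκ : (Real.sqrt κ)^2 = κ := Real.sq_sqrt hκ0.le
        rw [mul_pow, mul_pow, mul_pow, e2, e3, eκ]
        linarith
      calc Real.sqrt 2 * Real.sqrt 3 * l2norm u
          = Real.sqrt ((Real.sqrt 2 * Real.sqrt 3 * l2norm u)^2) := (Real.sqrt_sq hlhs0).symm
        _ ≤ Real.sqrt ((ε * Real.sqrt κ)^2) := Real.sqrt_le_sqrt hsq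
        _ = ε * Real.sqrt κ := Real.sqrt_sq hrhs0
    rw [show Real.sqrt 2 * (Real.sqrt 3 * (Real.sqrt κ)⁻¹ * l2norm u) =
        (Real.sqrt 2 * Real.sqrt 3 * l2norm u) * (Real.sqrt κ)⁻¹ by ring]
    have hinv := mul_le_mul_of_nonneg_right key (inv_nonneg.mpr hsκ.le)
    rwa [mul_assoc ε (Real.sqrt κ) (Real.sqrt κ)⁻¹, mul_inv_cancel₀ (ne_of_gt hsκ), mul_one] at hinv
  -- put it together
  have hK0 : 0 ≤ Real.sqrt 3 * (Real.sqrt κ)⁻¹ * l2norm u := by positivity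
  calc l2norm (toepBO u n f)
      ≤ Real.sqrt 3 * (Real.sqrt κ)⁻¹ * l2norm u * l2norm g := hbound
    _ ≤ Real.sqrt 3 * (Real.sqrt κ)⁻¹ * l2norm u * (Real.sqrt 2 * A + Real.sqrt 2 * κ * B) :=
        mul_le_mul_of_nonneg_left hsplitg hK0
    _ = (Real.sqrt 2 * (Real.sqrt 3 * (Real.sqrt κ)⁻¹ * l2norm u)) * A +
        (Real.sqrt 2 * (Real.sqrt 3 * (Real.sqrt κ)⁻¹ * l2norm u)) * κ * B := by ring
    _ ≤ ε * A + (ε * κ) * B := by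
        apply add_le_add
        · exact mul_le_mul_of_nonneg_right hcoef hA0
        · apply mul_le_mul_of_nonneg_right ?_ hB0
          exact mul_le_mul_of_nonneg_right hcoef hκ0.le
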